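/- arXiv:1111.7312 — 4 statements merged into one kernel-verified Lean document; each statement's English description precedes it below -/
import Mathlib

section
/- Let 1 ≤ p ≤ q and 1 ≤ r ≤ p. For every f ∈ L²_s(μ^p) and g ∈ L²_s(μ^q) (symmetric square-integrable kernels), one has ∫_{Z^{p+q-r}} (f ⋆_r^0 g)² dμ^{p+q-r} = ∫_{Z^r} (f ⋆_p^{p-r} f)(g ⋆_q^{q-r} g) dμ^r, whenever these contractions are well-defined. -/
open MeasureTheory

lemma append_swap {Z : Type*} {m n : ℕ} (x : Fin m → Z) (y : Fin n → Z) :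
    ∃ σ : Equiv.Perm (Fin (m + n)),
      (Fin.append y x ∘ Fin.cast (Nat.add_comm m n)) ∘ σ = Fin.append x y := by
  refine ⟨finSumFinEquiv.symm.trans ((Equiv.sumComm _ _).trans
    (finSumFinEquiv.trans (finCongr (Nat.add_comm n m)))), ?_⟩
  funext i
  rcases finSumFinEquiv.surjective i with ⟨j, rfl⟩
  cases j with
  | inl j => simp [Fin.append_left, Fin.append_right]
  | inr j => simp [Fin.append_left, Fin.append_right]

/-- For `1 ≤ r ≤ p ≤ q` (here `p = r + b`, `q = r + c` with `b ≤ c`) and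
symmetric kernels `f ∈ L²_s(μ^p)`, `g ∈ L²_s(μ^q)`:
`∫_{Z^{p+q-r}} (f ⋆_r^0 g)² dμ^{p+q-r} = ∫_{Z^r} (f ⋆_p^{p-r} f)(g ⋆_q^{q-r} g) dμ^r`. -/
theorem contraction_star_r_zero_identity
    {Z : Type*} [MeasurableSpace Z] (μ : Measure Z) [SigmaFinite μ]
    (r b c : ℕ) (hr : 1 ≤ r) (hbc : b ≤ c)
    (f : (Fin (r + b) → Z) → ℝ) (g : (Fin (r + c) → Z) → ℝ)
    (hfm : Measurable f) (hgm : Measurable g)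
    (hfs : ∀ (σ : Equiv.Perm (Fin (r + b))) (x : Fin (r + b) → Z), f (x ∘ σ) = f x)
    (hgs : ∀ (σ : Equiv.Perm (Fin (r + c))) (x : Fin (r + c) → Z), g (x ∘ σ) = g x)
    (hf : MemLp f 2 (Measure.pi fun _ : Fin (r + b) => μ))
    (hg : MemLp g 2 (Measure.pi fun _ : Fin (r + c) => μ)) :
    (∫ γ : Fin r → Z, ∫ t : Fin b → Z, ∫ s : Fin c → Z,
        (f (Fin.append γ t) * g (Fin.append γ s)) ^ 2
          ∂(Measure.pi fun _ : Fin c => μ) ∂(Measure.pi fun _ : Fin b => μ)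
          ∂(Measure.pi fun _ : Fin r => μ))
      = ∫ γ : Fin r → Z,
          (∫ t : Fin b → Z, (f (Fin.append t γ ∘ Fin.cast (Nat.add_comm r b))) ^ 2
              ∂(Measure.pi fun _ : Fin b => μ)) *
          (∫ s : Fin c → Z, (g (Fin.append s γ ∘ Fin.cast (Nat.add_comm r c))) ^ 2
              ∂(Measure.pi fun _ : Fin c => μ))
          ∂(Measure.pi fun _ : Fin r => μ) := by
  refine integral_congr_ae (Filter.Eventually.of_forall fun γ => ?_)
  have hf' : ∀ t : Fin b → Z,
      f (Fin.append γ t) = f (Fin.append t γ ∘ Fin.cast (Nat.add_comm r b)) := by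
    intro t
    obtain ⟨σ, hσ⟩ := append_swap γ t
    rw [← hσ, hfs]
  have hg' : ∀ s : Fin c → Z,
      g (Fin.append γ s) = g (Fin.append s γ ∘ Fin.cast (Nat.add_comm r c)) := by
    intro s
    obtain ⟨σ, hσ⟩ := append_swap γ s
    rw [← hσ, hgs]
  calc (∫ t : Fin b → Z, ∫ s : Fin c → Z,
        (f (Fin.append γ t) * g (Fin.append γ s)) ^ 2
          ∂(Measure.pi fun _ : Fin c => μ) ∂(Measure.pi fun _ : Fin b => μ))
      = ∫ t : Fin b → Z, (f (Fin.append t γ ∘ Fin.cast (Nat.add_comm r b))) ^ 2 *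
          ∫ s : Fin c → Z, (g (Fin.append s γ ∘ Fin.cast (Nat.add_comm r c))) ^ 2
            ∂(Measure.pi fun _ : Fin c => μ) ∂(Measure.pi fun _ : Fin b => μ) := by
        refine integral_congr_ae (Filter.Eventually.of_forall fun t => ?_)
        dsimp only; rw [← integral_const_mul]
        refine integral_congr_ae (Filter.Eventually.of_forall fun s => ?_)
        dsimp only; rw [mul_pow, hf' t, hg' s]
    _ = _ := by rw [integral_mul_const]
end

section
/- For symmetric kernels f ∈ L²_s(μ^p) and g ∈ L²_s(μ^q) with p, q ≥ 1, and for any r ∈ {1,…,p∧q} and l ∈ {1,…,r} such that the relevant contractions are square-integrable, one has ‖f ⋆_r^l g‖²_{L²(μ^{p+q-r-l})} ≤ ‖f ⋆_r^l f‖_{L²(μ^{2p-r-l})} · ‖g ⋆_r^l g‖_{L²(μ^{2q-r-l})}. -/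
open MeasureTheory ENNReal


lemma l2_holder {α : Type*} [MeasurableSpace α] (ρ : Measure α) {u v : α → ℝ≥0∞}
    (hu : AEMeasurable u ρ) (hv : AEMeasurable v ρ) :
    ∫⁻ x, u x * v x ∂ρ ≤
      (∫⁻ x, u x ^ 2 ∂ρ) ^ (1/2 : ℝ) * (∫⁻ x, v x ^ 2 ∂ρ) ^ (1/2 : ℝ) := by
  have hconj : (2 : ℝ).HolderConjugate 2 := Real.HolderConjugate.two_two
  have := ENNReal.lintegral_mul_le_Lp_mul_Lq ρ hconj hu hv
  simpa [ENNReal.rpow_two, Pi.mul_apply] using this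

section Abstract
variable {X Y W : Type*} [MeasurableSpace X] [MeasurableSpace Y] [MeasurableSpace W]
  {ν : Measure X} {σ : Measure Y} {τ : Measure W}
  [SigmaFinite ν] [SigmaFinite σ] [SigmaFinite τ]

lemma quad_integrable (h : X → Y → ℝ) (k : X → W → ℝ)
    (hhm : Measurable fun p : X × Y => h p.1 p.2)
    (hkm : Measurable fun p : X × W => k p.1 p.2)
    (hh2 : Integrable (fun p : X × Y => h p.1 p.2 ^ 2) (ν.prod σ))
    (hk2 : Integrable (fun p : X × W => k p.1 p.2 ^ 2) (ν.prod τ)) :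
    Integrable (fun r : (X × X) × (Y × W) =>
      (h r.1.1 r.2.1 * h r.1.2 r.2.1) * (k r.1.1 r.2.2 * k r.1.2 r.2.2))
      ((ν.prod ν).prod (σ.prod τ)) := by
  have hm1 : Measurable fun r : (X × X) × (Y × W) => h r.1.1 r.2.1 :=
    hhm.comp ((measurable_fst.fst).prodMk measurable_snd.fst)
  have hm2 : Measurable fun r : (X × X) × (Y × W) => h r.1.2 r.2.1 :=
    hhm.comp ((measurable_fst.snd).prodMk measurable_snd.fst)
  have hm3 : Measurable fun r : (X × X) × (Y × W) => k r.1.1 r.2.2 :=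
    hkm.comp ((measurable_fst.fst).prodMk measurable_snd.snd)
  have hm4 : Measurable fun r : (X × X) × (Y × W) => k r.1.2 r.2.2 :=
    hkm.comp ((measurable_fst.snd).prodMk measurable_snd.snd)
  have hM : Measurable fun r : (X × X) × (Y × W) =>
      (h r.1.1 r.2.1 * h r.1.2 r.2.1) * (k r.1.1 r.2.2 * k r.1.2 r.2.2) :=
    (hm1.mul hm2).mul (hm3.mul hm4)
  refine ⟨hM.aestronglyMeasurable, ?_⟩
  rw [hasFiniteIntegral_def]
  set eh : X → Y → ℝ≥0∞ := fun x y => (‖h x y‖₊ : ℝ≥0∞) with heh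
  set ek : X → W → ℝ≥0∞ := fun x w => (‖k x w‖₊ : ℝ≥0∞) with hek
  have ehm : Measurable fun p : X × Y => eh p.1 p.2 := hhm.nnnorm.coe_nnreal_ennreal
  have ekm : Measurable fun p : X × W => ek p.1 p.2 := hkm.nnnorm.coe_nnreal_ennreal
  have ehx : ∀ x, Measurable fun y => eh x y :=
    fun x => ehm.comp (measurable_const.prodMk measurable_id)
  have ekx : ∀ x, Measurable fun w => ek x w :=
    fun x => ekm.comp (measurable_const.prodMk measurable_id)
  set Hh : X → ℝ≥0∞ := fun x => (∫⁻ y, eh x y ^ 2 ∂σ) ^ (1/2 : ℝ) with hHh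
  set Hk : X → ℝ≥0∞ := fun x => (∫⁻ w, ek x w ^ 2 ∂τ) ^ (1/2 : ℝ) with hHk
  have Hhm : Measurable Hh :=
    ENNReal.continuous_rpow_const.measurable.comp
      (Measurable.lintegral_prod_right (f := fun x y => eh x y ^ 2) (ehm.pow_const 2))
  have Hkm : Measurable Hk :=
    ENNReal.continuous_rpow_const.measurable.comp
      (Measurable.lintegral_prod_right (f := fun x w => ek x w ^ 2) (ekm.pow_const 2))
  -- finiteness of the L² masses
  have Ih : ∫⁻ x, ∫⁻ y, eh x y ^ 2 ∂σ ∂ν < ⊤ := by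
    have h2 := hh2.2
    rw [hasFiniteIntegral_def] at h2
    have : ∫⁻ p : X × Y, (‖h p.1 p.2 ^ 2‖₊ : ℝ≥0∞) ∂(ν.prod σ)
        = ∫⁻ x, ∫⁻ y, eh x y ^ 2 ∂σ ∂ν := by
      rw [lintegral_prod _ ((hhm.pow_const 2).nnnorm.coe_nnreal_ennreal.aemeasurable)]
      refine lintegral_congr fun x => lintegral_congr fun y => ?_
      simp [heh, nnnorm_pow, pow_two, ENNReal.coe_mul]
    rw [← this]; exact h2
  have Ik : ∫⁻ x, ∫⁻ w, ek x w ^ 2 ∂τ ∂ν < ⊤ := by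
    have h2 := hk2.2
    rw [hasFiniteIntegral_def] at h2
    have : ∫⁻ p : X × W, (‖k p.1 p.2 ^ 2‖₊ : ℝ≥0∞) ∂(ν.prod τ)
        = ∫⁻ x, ∫⁻ w, ek x w ^ 2 ∂τ ∂ν := by
      rw [lintegral_prod _ ((hkm.pow_const 2).nnnorm.coe_nnreal_ennreal.aemeasurable)]
      refine lintegral_congr fun x => lintegral_congr fun w => ?_
      simp [hek, nnnorm_pow, pow_two, ENNReal.coe_mul]
    rw [← this]; exact h2
  have HhSq : ∀ x, Hh x ^ 2 = ∫⁻ y, eh x y ^ 2 ∂σ := by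
    intro x
    rw [hHh, ← ENNReal.rpow_two, ← ENNReal.rpow_mul]
    norm_num
  have HkSq : ∀ x, Hk x ^ 2 = ∫⁻ w, ek x w ^ 2 ∂τ := by
    intro x
    rw [hHk, ← ENNReal.rpow_two, ← ENNReal.rpow_mul]
    norm_num
  calc ∫⁻ r, (‖(h r.1.1 r.2.1 * h r.1.2 r.2.1) * (k r.1.1 r.2.2 * k r.1.2 r.2.2)‖₊ : ℝ≥0∞)
        ∂((ν.prod ν).prod (σ.prod τ))
      = ∫⁻ q : X × X, ∫⁻ p : Y × W,
          (eh q.1 p.1 * eh q.2 p.1) * (ek q.1 p.2 * ek q.2 p.2) ∂(σ.prod τ) ∂(ν.prod ν) := by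
        rw [lintegral_prod _ hM.nnnorm.coe_nnreal_ennreal.aemeasurable]
        refine lintegral_congr fun q => lintegral_congr fun p => ?_
        simp [heh, hek, nnnorm_mul, ENNReal.coe_mul]
    _ = ∫⁻ q : X × X, (∫⁻ y, eh q.1 y * eh q.2 y ∂σ) * (∫⁻ w, ek q.1 w * ek q.2 w ∂τ)
          ∂(ν.prod ν) := by
        refine lintegral_congr fun q => ?_
        exact lintegral_prod_mul ((ehx q.1).mul (ehx q.2)).aemeasurable
          ((ekx q.1).mul (ekx q.2)).aemeasurable
    _ ≤ ∫⁻ q : X × X, (Hh q.1 * Hk q.1) * (Hh q.2 * Hk q.2) ∂(ν.prod ν) := by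
        refine lintegral_mono fun q => ?_
        have b1 : ∫⁻ y, eh q.1 y * eh q.2 y ∂σ ≤ Hh q.1 * Hh q.2 :=
          l2_holder σ (ehx q.1).aemeasurable (ehx q.2).aemeasurable
        have b2 : ∫⁻ w, ek q.1 w * ek q.2 w ∂τ ≤ Hk q.1 * Hk q.2 :=
          l2_holder τ (ekx q.1).aemeasurable (ekx q.2).aemeasurable
        calc (∫⁻ y, eh q.1 y * eh q.2 y ∂σ) * (∫⁻ w, ek q.1 w * ek q.2 w ∂τ)
            ≤ (Hh q.1 * Hh q.2) * (Hk q.1 * Hk q.2) := mul_le_mul' b1 b2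
          _ = (Hh q.1 * Hk q.1) * (Hh q.2 * Hk q.2) := by ring
    _ = (∫⁻ x, Hh x * Hk x ∂ν) * (∫⁻ x, Hh x * Hk x ∂ν) :=
        lintegral_prod_mul (Hhm.mul Hkm).aemeasurable (Hhm.mul Hkm).aemeasurable
    _ ≤ ((∫⁻ x, Hh x ^ 2 ∂ν) ^ (1/2 : ℝ) * (∫⁻ x, Hk x ^ 2 ∂ν) ^ (1/2 : ℝ)) *
        ((∫⁻ x, Hh x ^ 2 ∂ν) ^ (1/2 : ℝ) * (∫⁻ x, Hk x ^ 2 ∂ν) ^ (1/2 : ℝ)) :=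
        mul_le_mul' (l2_holder ν Hhm.aemeasurable Hkm.aemeasurable)
          (l2_holder ν Hhm.aemeasurable Hkm.aemeasurable)
    _ < ⊤ := by
        have e1 : ∫⁻ x, Hh x ^ 2 ∂ν = ∫⁻ x, ∫⁻ y, eh x y ^ 2 ∂σ ∂ν :=
          lintegral_congr fun x => HhSq x
        have e2 : ∫⁻ x, Hk x ^ 2 ∂ν = ∫⁻ x, ∫⁻ w, ek x w ^ 2 ∂τ ∂ν :=
          lintegral_congr fun x => HkSq x
        rw [e1, e2]
        have f1 : (∫⁻ x, ∫⁻ y, eh x y ^ 2 ∂σ ∂ν) ^ (1/2 : ℝ) < ⊤ :=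
          ENNReal.rpow_lt_top_of_nonneg (by norm_num) Ih.ne
        have f2 : (∫⁻ x, ∫⁻ w, ek x w ^ 2 ∂τ ∂ν) ^ (1/2 : ℝ) < ⊤ :=
          ENNReal.rpow_lt_top_of_nonneg (by norm_num) Ik.ne
        exact ENNReal.mul_lt_top (ENNReal.mul_lt_top f1 f2) (ENNReal.mul_lt_top f1 f2)

lemma ae_prod_of_ae_left {P : X → Prop} (hP : ∀ᵐ x ∂ν, P x) :
    ∀ᵐ q : X × X ∂(ν.prod ν), P q.1 ∧ P q.2 := by
  have h1 : ∀ᵐ q : X × X ∂(ν.prod ν), P q.1 := by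
    rw [ae_iff] at hP ⊢
    refine measure_mono_null (t := {x | ¬ P x} ×ˢ (Set.univ : Set X))
      (fun q hq => Set.mk_mem_prod hq (Set.mem_univ q.2)) ?_
    rw [Measure.prod_prod, hP, zero_mul]
  have h2 : ∀ᵐ q : X × X ∂(ν.prod ν), P q.2 := by
    rw [ae_iff] at hP ⊢
    refine measure_mono_null (t := (Set.univ : Set X) ×ˢ {x | ¬ P x})
      (fun q hq => Set.mk_mem_prod (Set.mem_univ q.1) hq) ?_
    rw [Measure.prod_prod, hP, mul_zero]
  exact h1.and h2

lemma contraction_ident (h : X → Y → ℝ) (k : X → W → ℝ)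
    (hhm : Measurable fun p : X × Y => h p.1 p.2)
    (hkm : Measurable fun p : X × W => k p.1 p.2)
    (hh2 : Integrable (fun p : X × Y => h p.1 p.2 ^ 2) (ν.prod σ))
    (hk2 : Integrable (fun p : X × W => k p.1 p.2 ^ 2) (ν.prod τ)) :
    Integrable (fun q : X × X =>
        (∫ y, h q.1 y * h q.2 y ∂σ) * (∫ w, k q.1 w * k q.2 w ∂τ)) (ν.prod ν) ∧
    ∫ p : Y × W, (∫ x, h x p.1 * k x p.2 ∂ν) ^ 2 ∂(σ.prod τ) =
      ∫ q : X × X, (∫ y, h q.1 y * h q.2 y ∂σ) * (∫ w, k q.1 w * k q.2 w ∂τ) ∂(ν.prod ν) := by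
  have hQint := quad_integrable h k hhm hkm hh2 hk2
  -- a.e. slice facts
  have hae : ∀ᵐ x ∂ν, Integrable (fun y => h x y ^ 2) σ ∧ Integrable (fun w => k x w ^ 2) τ :=
    hh2.prod_right_ae.and hk2.prod_right_ae
  have haeq : ∀ᵐ q : X × X ∂(ν.prod ν),
      (Integrable (fun y => h q.1 y ^ 2) σ ∧ Integrable (fun w => k q.1 w ^ 2) τ) ∧
      (Integrable (fun y => h q.2 y ^ 2) σ ∧ Integrable (fun w => k q.2 w ^ 2) τ) :=
    ae_prod_of_ae_left hae
  -- measurability of slices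
  have hmx : ∀ x : X, Measurable fun y => h x y :=
    fun x => hhm.comp (measurable_const.prodMk measurable_id)
  have hmkx : ∀ x : X, Measurable fun w => k x w :=
    fun x => hkm.comp (measurable_const.prodMk measurable_id)
  -- (b): a.e. identification of the partial integral with A*B
  have hb : ∀ᵐ q : X × X ∂(ν.prod ν),
      (∫ p : Y × W, (fun r : (X × X) × (Y × W) =>
          (h r.1.1 r.2.1 * h r.1.2 r.2.1) * (k r.1.1 r.2.2 * k r.1.2 r.2.2)) (q, p)
        ∂(σ.prod τ)) =
      (∫ y, h q.1 y * h q.2 y ∂σ) * (∫ w, k q.1 w * k q.2 w ∂τ) := by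
    filter_upwards [haeq] with q _
    exact integral_prod_mul (μ := σ) (ν := τ)
      (fun y => h q.1 y * h q.2 y) (fun w => k q.1 w * k q.2 w)
  constructor
  · exact (hQint.integral_prod_left).congr hb
  · -- (c): pointwise identification of F² with inner integral over ν ⊗ ν
    have hc : ∀ p : Y × W, (∫ x, h x p.1 * k x p.2 ∂ν) ^ 2 =
        ∫ q : X × X, (fun r : (X × X) × (Y × W) =>
          (h r.1.1 r.2.1 * h r.1.2 r.2.1) * (k r.1.1 r.2.2 * k r.1.2 r.2.2)) (q, p)
          ∂(ν.prod ν) := by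
      intro p
      have := integral_prod_mul (μ := ν) (ν := ν)
        (fun x => h x p.1 * k x p.2) (fun x => h x p.1 * k x p.2)
      rw [pow_two, ← this]
      exact integral_congr_ae (Filter.Eventually.of_forall fun q => by ring)
    calc ∫ p : Y × W, (∫ x, h x p.1 * k x p.2 ∂ν) ^ 2 ∂(σ.prod τ)
        = ∫ p : Y × W, ∫ q : X × X, (fun r : (X × X) × (Y × W) =>
            (h r.1.1 r.2.1 * h r.1.2 r.2.1) * (k r.1.1 r.2.2 * k r.1.2 r.2.2)) (q, p)
            ∂(ν.prod ν) ∂(σ.prod τ) := integral_congr_ae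
              (Filter.Eventually.of_forall fun p => hc p)
      _ = ∫ q : X × X, ∫ p : Y × W, (fun r : (X × X) × (Y × W) =>
            (h r.1.1 r.2.1 * h r.1.2 r.2.1) * (k r.1.1 r.2.2 * k r.1.2 r.2.2)) (q, p)
            ∂(σ.prod τ) ∂(ν.prod ν) := by
          apply integral_integral_swap
          exact hQint.swap
      _ = ∫ q : X × X, (∫ y, h q.1 y * h q.2 y ∂σ) * (∫ w, k q.1 w * k q.2 w ∂τ)
            ∂(ν.prod ν) := integral_congr_ae hb

lemma contraction_key (h : X → Y → ℝ) (k : X → W → ℝ)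
    (hhm : Measurable fun p : X × Y => h p.1 p.2)
    (hkm : Measurable fun p : X × W => k p.1 p.2)
    (hh2 : Integrable (fun p : X × Y => h p.1 p.2 ^ 2) (ν.prod σ))
    (hk2 : Integrable (fun p : X × W => k p.1 p.2 ^ 2) (ν.prod τ)) :
    ∫ p : Y × W, (∫ x, h x p.1 * k x p.2 ∂ν) ^ 2 ∂(σ.prod τ) ≤
      Real.sqrt (∫ p : Y × Y, (∫ x, h x p.1 * h x p.2 ∂ν) ^ 2 ∂(σ.prod σ)) *
      Real.sqrt (∫ p : W × W, (∫ x, k x p.1 * k x p.2 ∂ν) ^ 2 ∂(τ.prod τ)) := by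
  obtain ⟨hAB, eqAB⟩ := contraction_ident h k hhm hkm hh2 hk2
  obtain ⟨hAA, eqAA⟩ := contraction_ident h h hhm hhm hh2 hh2
  obtain ⟨hBB, eqBB⟩ := contraction_ident k k hkm hkm hk2 hk2
  set A : X × X → ℝ := fun q => ∫ y, h q.1 y * h q.2 y ∂σ with hA
  set B : X × X → ℝ := fun q => ∫ w, k q.1 w * k q.2 w ∂τ with hB
  -- measurability of A and B
  have hAm : AEStronglyMeasurable A (ν.prod ν) := by
    apply StronglyMeasurable.aestronglyMeasurable
    apply MeasureTheory.StronglyMeasurable.integral_prod_right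
      (f := fun (q : X × X) (y : Y) => h q.1 y * h q.2 y)
    apply Measurable.stronglyMeasurable
    exact (hhm.comp ((measurable_fst.fst).prodMk measurable_snd)).mul
      (hhm.comp ((measurable_fst.snd).prodMk measurable_snd))
  have hBm : AEStronglyMeasurable B (ν.prod ν) := by
    apply StronglyMeasurable.aestronglyMeasurable
    apply MeasureTheory.StronglyMeasurable.integral_prod_right
      (f := fun (q : X × X) (w : W) => k q.1 w * k q.2 w)
    apply Measurable.stronglyMeasurable
    exact (hkm.comp ((measurable_fst.fst).prodMk measurable_snd)).mul
      (hkm.comp ((measurable_fst.snd).prodMk measurable_snd))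
  -- A, B ∈ L²
  have hA2 : Integrable (fun q => A q ^ 2) (ν.prod ν) := by
    refine hAA.congr (Filter.Eventually.of_forall fun q => ?_)
    simp [hA, pow_two]
  have hB2 : Integrable (fun q => B q ^ 2) (ν.prod ν) := by
    refine hBB.congr (Filter.Eventually.of_forall fun q => ?_)
    simp [hB, pow_two]
  have hAL2 : MemLp A 2 (ν.prod ν) := (memLp_two_iff_integrable_sq hAm).2 hA2
  have hBL2 : MemLp B 2 (ν.prod ν) := (memLp_two_iff_integrable_sq hBm).2 hB2
  have hconj : (2 : ℝ).HolderConjugate 2 := Real.HolderConjugate.two_two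
  have habs : ∫ q, |A q| * |B q| ∂(ν.prod ν) ≤
      (∫ q, |A q| ^ (2 : ℝ) ∂(ν.prod ν)) ^ (1 / (2:ℝ)) *
      (∫ q, |B q| ^ (2 : ℝ) ∂(ν.prod ν)) ^ (1 / (2:ℝ)) := by
    refine integral_mul_le_Lp_mul_Lq_of_nonneg hconj
      (Filter.Eventually.of_forall fun q => abs_nonneg _)
      (Filter.Eventually.of_forall fun q => abs_nonneg _) ?_ ?_
    · rw [ENNReal.ofReal_ofNat]; exact hAL2.abs
    · rw [ENNReal.ofReal_ofNat]; exact hBL2.abs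
  have absq : ∀ x : ℝ, |x| ^ (2:ℝ) = x ^ 2 := fun x => by
    rw [Real.rpow_two, sq_abs]
  have sqrtd : ∀ u : X × X → ℝ, (∫ q, |u q| ^ (2 : ℝ) ∂(ν.prod ν)) ^ (1 / (2:ℝ)) =
      Real.sqrt (∫ q, u q ^ 2 ∂(ν.prod ν)) := by
    intro u
    rw [Real.sqrt_eq_rpow]
    congr 1
    exact integral_congr_ae (Filter.Eventually.of_forall fun q => absq (u q))
  have habs2 : Integrable (fun q => |A q| * |B q|) (ν.prod ν) := by
    refine hAB.abs.congr (Filter.Eventually.of_forall fun q => ?_)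
    simp [hA, hB, abs_mul]
  calc ∫ p : Y × W, (∫ x, h x p.1 * k x p.2 ∂ν) ^ 2 ∂(σ.prod τ)
      = ∫ q, A q * B q ∂(ν.prod ν) := eqAB
    _ ≤ ∫ q, |A q| * |B q| ∂(ν.prod ν) := by
        refine integral_mono hAB habs2 fun q => ?_
        calc A q * B q ≤ |A q * B q| := le_abs_self _
          _ = |A q| * |B q| := abs_mul _ _
    _ ≤ (∫ q, |A q| ^ (2 : ℝ) ∂(ν.prod ν)) ^ (1 / (2:ℝ)) *
        (∫ q, |B q| ^ (2 : ℝ) ∂(ν.prod ν)) ^ (1 / (2:ℝ)) := habs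
    _ = Real.sqrt (∫ q, A q ^ 2 ∂(ν.prod ν)) * Real.sqrt (∫ q, B q ^ 2 ∂(ν.prod ν)) := by
        rw [sqrtd A, sqrtd B]
    _ = Real.sqrt (∫ p : Y × Y, (∫ x, h x p.1 * h x p.2 ∂ν) ^ 2 ∂(σ.prod σ)) *
        Real.sqrt (∫ p : W × W, (∫ x, k x p.1 * k x p.2 ∂ν) ^ 2 ∂(τ.prod τ)) := by
        congr 1
        · congr 1
          rw [eqAA]
          exact integral_congr_ae (Filter.Eventually.of_forall fun q => by simp [hA, pow_two])
        · congr 1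
          rw [eqBB]
          exact integral_congr_ae (Filter.Eventually.of_forall fun q => by simp [hB, pow_two])

end Abstract


lemma measurePreserving_finAppend {Z : Type*} [MeasurableSpace Z] (μ : Measure Z) [SigmaFinite μ]
    (m n : ℕ) :
    MeasurePreserving (fun p : (Fin m → Z) × (Fin n → Z) => Fin.append p.1 p.2)
      ((Measure.pi fun _ : Fin m => μ).prod (Measure.pi fun _ : Fin n => μ))
      (Measure.pi fun _ : Fin (m + n) => μ) := by
  have h1 := measurePreserving_sumPiEquivProdPi_symm (fun _ : Fin m ⊕ Fin n => μ)
  have h2 := measurePreserving_piCongrLeft (α := fun _ : Fin (m + n) => Z) (fun _ => μ) finSumFinEquiv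
  have h3 := h2.comp h1
  convert h3 using 1
  funext p
  funext j
  obtain ⟨i, rfl⟩ := finSumFinEquiv.surjective j
  cases i with
  | inl i => simp [MeasurableEquiv.piCongrLeft, MeasurableEquiv.sumPiEquivProdPi,
      Equiv.piCongrLeft_apply_apply, Fin.append_left, -finSumFinEquiv_apply_left]; exact Fin.append_left _ _ _
  | inr i => simp [MeasurableEquiv.piCongrLeft, MeasurableEquiv.sumPiEquivProdPi,
      Equiv.piCongrLeft_apply_apply, Fin.append_right, -finSumFinEquiv_apply_right]; exact Fin.append_right _ _ _

lemma measurePreserving_reorder {Γ X Y : Type*} [MeasurableSpace Γ] [MeasurableSpace X]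
    [MeasurableSpace Y] (ρ : Measure Γ) (ν : Measure X) (σ : Measure Y)
    [SigmaFinite ρ] [SigmaFinite ν] [SigmaFinite σ] :
    MeasurePreserving (fun q : Γ × (X × Y) => (q.2.1, (q.1, q.2.2)))
      (ρ.prod (ν.prod σ)) (ν.prod (ρ.prod σ)) := by
  have a1 : MeasurePreserving (MeasurableEquiv.prodAssoc.symm : Γ × (X × Y) ≃ᵐ (Γ × X) × Y)
      (ρ.prod (ν.prod σ)) ((ρ.prod ν).prod σ) :=
    (measurePreserving_prodAssoc ρ ν σ).symm MeasurableEquiv.prodAssoc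
  have a2 : MeasurePreserving (Prod.map (Prod.swap : Γ × X → X × Γ) (id : Y → Y))
      ((ρ.prod ν).prod σ) ((ν.prod ρ).prod σ) :=
    (Measure.measurePreserving_swap (μ := ρ) (ν := ν)).prod (MeasurePreserving.id σ)
  have a3 : MeasurePreserving (MeasurableEquiv.prodAssoc : (X × Γ) × Y ≃ᵐ X × (Γ × Y))
      ((ν.prod ρ).prod σ) (ν.prod (ρ.prod σ)) :=
    measurePreserving_prodAssoc ν ρ σ
  have := (a3.comp a2).comp a1
  convert this using 1
  rfl

-- the combined map
lemma measurePreserving_T {Z : Type*} [MeasurableSpace Z] (μ : Measure Z) [SigmaFinite μ]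
    (l m a : ℕ) :
    MeasurePreserving
      (fun q : (Fin m → Z) × ((Fin l → Z) × (Fin a → Z)) =>
        Fin.append q.2.1 (Fin.append q.1 q.2.2))
      ((Measure.pi fun _ : Fin m => μ).prod
        ((Measure.pi fun _ : Fin l => μ).prod (Measure.pi fun _ : Fin a => μ)))
      (Measure.pi fun _ : Fin (l + (m + a)) => μ) := by
  have s1 := measurePreserving_reorder (Measure.pi fun _ : Fin m => μ)
    (Measure.pi fun _ : Fin l => μ) (Measure.pi fun _ : Fin a => μ)
  have s2 : MeasurePreserving (Prod.map (id : (Fin l → Z) → (Fin l → Z))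
      (fun p : (Fin m → Z) × (Fin a → Z) => Fin.append p.1 p.2))
      ((Measure.pi fun _ : Fin l => μ).prod
        ((Measure.pi fun _ : Fin m => μ).prod (Measure.pi fun _ : Fin a => μ)))
      ((Measure.pi fun _ : Fin l => μ).prod (Measure.pi fun _ : Fin (m + a) => μ)) :=
    (MeasurePreserving.id _).prod (measurePreserving_finAppend μ m a)
  have s3 := measurePreserving_finAppend μ l (m + a)
  have := (s3.comp s2).comp s1
  convert this using 1
  rfl


/-- Cauchy–Schwarz estimate for contractions: for symmetric square-integrable
kernels `f ∈ L²_s(μ^p)`, `g ∈ L²_s(μ^q)` (here `p = l + (m + a)`, `q = l + (m + c)`,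
`r = l + m`, with `1 ≤ l ≤ r ≤ p ∧ q`), if the relevant contractions are square-integrable then
`‖f ⋆_r^l g‖² ≤ ‖f ⋆_r^l f‖ ⋅ ‖g ⋆_r^l g‖`. -/
theorem contraction_cauchy_schwarz
    {Z : Type*} [MeasurableSpace Z] (μ : Measure Z) [SigmaFinite μ]
    (l m a c : ℕ) (hl : 1 ≤ l)
    (f : (Fin (l + (m + a)) → Z) → ℝ) (g : (Fin (l + (m + c)) → Z) → ℝ)
    (hfm : Measurable f) (hgm : Measurable g)
    (hfs : ∀ (σ : Equiv.Perm (Fin (l + (m + a)))) (x), f (x ∘ σ) = f x)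
    (hgs : ∀ (σ : Equiv.Perm (Fin (l + (m + c)))) (x), g (x ∘ σ) = g x)
    (hf : MemLp f 2 (Measure.pi fun _ : Fin (l + (m + a)) => μ))
    (hg : MemLp g 2 (Measure.pi fun _ : Fin (l + (m + c)) => μ))
    -- square-integrability of the contraction `f ⋆_r^l g`
    (hfg2 : Integrable (fun p : (Fin m → Z) × (Fin a → Z) × (Fin c → Z) =>
        (∫ z : Fin l → Z,
            f (Fin.append z (Fin.append p.1 p.2.1)) * g (Fin.append z (Fin.append p.1 p.2.2))
            ∂(Measure.pi fun _ : Fin l => μ)) ^ 2)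
        ((Measure.pi fun _ : Fin m => μ).prod
          ((Measure.pi fun _ : Fin a => μ).prod (Measure.pi fun _ : Fin c => μ))))
    -- square-integrability of the contraction `f ⋆_r^l f`
    (hff2 : Integrable (fun p : (Fin m → Z) × (Fin a → Z) × (Fin a → Z) =>
        (∫ z : Fin l → Z,
            f (Fin.append z (Fin.append p.1 p.2.1)) * f (Fin.append z (Fin.append p.1 p.2.2))
            ∂(Measure.pi fun _ : Fin l => μ)) ^ 2)
        ((Measure.pi fun _ : Fin m => μ).prod
          ((Measure.pi fun _ : Fin a => μ).prod (Measure.pi fun _ : Fin a => μ))))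
    -- square-integrability of the contraction `g ⋆_r^l g`
    (hgg2 : Integrable (fun p : (Fin m → Z) × (Fin c → Z) × (Fin c → Z) =>
        (∫ z : Fin l → Z,
            g (Fin.append z (Fin.append p.1 p.2.1)) * g (Fin.append z (Fin.append p.1 p.2.2))
            ∂(Measure.pi fun _ : Fin l => μ)) ^ 2)
        ((Measure.pi fun _ : Fin m => μ).prod
          ((Measure.pi fun _ : Fin c => μ).prod (Measure.pi fun _ : Fin c => μ)))) :
    (∫ γ : Fin m → Z, ∫ t : Fin a → Z, ∫ s : Fin c → Z,
        (∫ z : Fin l → Z,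
            f (Fin.append z (Fin.append γ t)) * g (Fin.append z (Fin.append γ s))
            ∂(Measure.pi fun _ : Fin l => μ)) ^ 2
        ∂(Measure.pi fun _ : Fin c => μ) ∂(Measure.pi fun _ : Fin a => μ)
        ∂(Measure.pi fun _ : Fin m => μ))
      ≤ Real.sqrt (∫ γ : Fin m → Z, ∫ t : Fin a → Z, ∫ t' : Fin a → Z,
            (∫ z : Fin l → Z,
                f (Fin.append z (Fin.append γ t)) * f (Fin.append z (Fin.append γ t'))
                ∂(Measure.pi fun _ : Fin l => μ)) ^ 2
            ∂(Measure.pi fun _ : Fin a => μ) ∂(Measure.pi fun _ : Fin a => μ)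
            ∂(Measure.pi fun _ : Fin m => μ)) *
        Real.sqrt (∫ γ : Fin m → Z, ∫ s : Fin c → Z, ∫ s' : Fin c → Z,
            (∫ z : Fin l → Z,
                g (Fin.append z (Fin.append γ s)) * g (Fin.append z (Fin.append γ s'))
                ∂(Measure.pi fun _ : Fin l => μ)) ^ 2
            ∂(Measure.pi fun _ : Fin c => μ) ∂(Measure.pi fun _ : Fin c => μ)
            ∂(Measure.pi fun _ : Fin m => μ)) := by
  classical
  set νl := (Measure.pi fun _ : Fin l => μ) with hνl
  set ρ := (Measure.pi fun _ : Fin m => μ) with hρ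
  set σa := (Measure.pi fun _ : Fin a => μ) with hσa
  set τc := (Measure.pi fun _ : Fin c => μ) with hτc
  -- square integrability of f and g
  have hfsq : Integrable (fun x => f x ^ 2) (Measure.pi fun _ : Fin (l + (m + a)) => μ) :=
    (memLp_two_iff_integrable_sq hf.aestronglyMeasurable).1 hf
  have hgsq : Integrable (fun x => g x ^ 2) (Measure.pi fun _ : Fin (l + (m + c)) => μ) :=
    (memLp_two_iff_integrable_sq hg.aestronglyMeasurable).1 hg
  have hTf := measurePreserving_T μ l m a
  have hTg := measurePreserving_T μ l m c
  have hHf : Integrable (fun q : (Fin m → Z) × ((Fin l → Z) × (Fin a → Z)) =>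
      f (Fin.append q.2.1 (Fin.append q.1 q.2.2)) ^ 2) (ρ.prod (νl.prod σa)) :=
    (hTf.integrable_comp hfsq.aestronglyMeasurable).2 hfsq
  have hHg : Integrable (fun q : (Fin m → Z) × ((Fin l → Z) × (Fin c → Z)) =>
      g (Fin.append q.2.1 (Fin.append q.1 q.2.2)) ^ 2) (ρ.prod (νl.prod τc)) :=
    (hTg.integrable_comp hgsq.aestronglyMeasurable).2 hgsq
  have haef : ∀ᵐ γ ∂ρ, Integrable
      (fun p : (Fin l → Z) × (Fin a → Z) => f (Fin.append p.1 (Fin.append γ p.2)) ^ 2)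
      (νl.prod σa) := hHf.prod_right_ae
  have haeg : ∀ᵐ γ ∂ρ, Integrable
      (fun p : (Fin l → Z) × (Fin c → Z) => g (Fin.append p.1 (Fin.append γ p.2)) ^ 2)
      (νl.prod τc) := hHg.prod_right_ae
  -- measurability of slices
  have hmf : ∀ γ : Fin m → Z, Measurable fun p : (Fin l → Z) × (Fin a → Z) =>
      f (Fin.append p.1 (Fin.append γ p.2)) := fun γ =>
    hfm.comp ((measurePreserving_finAppend μ l (m + a)).measurable.comp
      (measurable_fst.prodMk ((measurePreserving_finAppend μ m a).measurable.comp
        (measurable_const.prodMk measurable_snd))))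
  have hmg : ∀ γ : Fin m → Z, Measurable fun p : (Fin l → Z) × (Fin c → Z) =>
      g (Fin.append p.1 (Fin.append γ p.2)) := fun γ =>
    hgm.comp ((measurePreserving_finAppend μ l (m + c)).measurable.comp
      (measurable_fst.prodMk ((measurePreserving_finAppend μ m c).measurable.comp
        (measurable_const.prodMk measurable_snd))))
  -- the γ-level quantities
  set S : (Fin m → Z) → ℝ := fun γ => ∫ p : (Fin a → Z) × (Fin c → Z),
      (∫ z, f (Fin.append z (Fin.append γ p.1)) * g (Fin.append z (Fin.append γ p.2)) ∂νl) ^ 2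
      ∂(σa.prod τc) with hSdef
  set Φ : (Fin m → Z) → ℝ := fun γ => ∫ p : (Fin a → Z) × (Fin a → Z),
      (∫ z, f (Fin.append z (Fin.append γ p.1)) * f (Fin.append z (Fin.append γ p.2)) ∂νl) ^ 2
      ∂(σa.prod σa) with hΦdef
  set Ψ : (Fin m → Z) → ℝ := fun γ => ∫ p : (Fin c → Z) × (Fin c → Z),
      (∫ z, g (Fin.append z (Fin.append γ p.1)) * g (Fin.append z (Fin.append γ p.2)) ∂νl) ^ 2
      ∂(τc.prod τc) with hΨdef
  -- the per-γ Cauchy-Schwarz bound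
  have main : ∀ᵐ γ ∂ρ, S γ ≤ Real.sqrt (Φ γ) * Real.sqrt (Ψ γ) := by
    filter_upwards [haef, haeg] with γ h1 h2
    simp only [hSdef, hΦdef, hΨdef]
    exact contraction_key (fun x y => f (Fin.append x (Fin.append γ y)))
      (fun x w => g (Fin.append x (Fin.append γ w))) (hmf γ) (hmg γ) h1 h2
  -- integrability of S, Φ, Ψ
  have hSint : Integrable S ρ := hfg2.integral_prod_left
  have hΦint : Integrable Φ ρ := hff2.integral_prod_left
  have hΨint : Integrable Ψ ρ := hgg2.integral_prod_left
  have hΦ0 : ∀ γ, 0 ≤ Φ γ := fun γ => integral_nonneg fun p => sq_nonneg _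
  have hΨ0 : ∀ γ, 0 ≤ Ψ γ := fun γ => integral_nonneg fun p => sq_nonneg _
  -- measurability of Φ and Ψ
  have hjf : Measurable fun r :
      ((Fin m → Z) × ((Fin a → Z) × (Fin a → Z))) × (Fin l → Z) =>
      f (Fin.append r.2 (Fin.append r.1.1 r.1.2.1)) *
      f (Fin.append r.2 (Fin.append r.1.1 r.1.2.2)) := by
    have app1 : ∀ (u : ((Fin m → Z) × ((Fin a → Z) × (Fin a → Z))) × (Fin l → Z) → Fin a → Z),
        Measurable u → Measurable fun r :
          ((Fin m → Z) × ((Fin a → Z) × (Fin a → Z))) × (Fin l → Z) =>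
          f (Fin.append r.2 (Fin.append r.1.1 (u r))) := fun u hu =>
      hfm.comp ((measurePreserving_finAppend μ l (m + a)).measurable.comp
        (measurable_snd.prodMk ((measurePreserving_finAppend μ m a).measurable.comp
          (measurable_fst.fst.prodMk hu))))
    exact (app1 _ measurable_fst.snd.fst).mul (app1 _ measurable_fst.snd.snd)
  have hjg : Measurable fun r :
      ((Fin m → Z) × ((Fin c → Z) × (Fin c → Z))) × (Fin l → Z) =>
      g (Fin.append r.2 (Fin.append r.1.1 r.1.2.1)) *
      g (Fin.append r.2 (Fin.append r.1.1 r.1.2.2)) := by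
    have app1 : ∀ (u : ((Fin m → Z) × ((Fin c → Z) × (Fin c → Z))) × (Fin l → Z) → Fin c → Z),
        Measurable u → Measurable fun r :
          ((Fin m → Z) × ((Fin c → Z) × (Fin c → Z))) × (Fin l → Z) =>
          g (Fin.append r.2 (Fin.append r.1.1 (u r))) := fun u hu =>
      hgm.comp ((measurePreserving_finAppend μ l (m + c)).measurable.comp
        (measurable_snd.prodMk ((measurePreserving_finAppend μ m c).measurable.comp
          (measurable_fst.fst.prodMk hu))))
    exact (app1 _ measurable_fst.snd.fst).mul (app1 _ measurable_fst.snd.snd)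
  have hΦm : StronglyMeasurable Φ := by
    apply MeasureTheory.StronglyMeasurable.integral_prod_right'
      (f := fun u : (Fin m → Z) × ((Fin a → Z) × (Fin a → Z)) =>
        (∫ z, f (Fin.append z (Fin.append u.1 u.2.1)) *
          f (Fin.append z (Fin.append u.1 u.2.2)) ∂νl) ^ 2)
    exact ((hjf.stronglyMeasurable.integral_prod_right').measurable.pow_const 2).stronglyMeasurable
  have hΨm : StronglyMeasurable Ψ := by
    apply MeasureTheory.StronglyMeasurable.integral_prod_right'
      (f := fun u : (Fin m → Z) × ((Fin c → Z) × (Fin c → Z)) =>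
        (∫ z, g (Fin.append z (Fin.append u.1 u.2.1)) *
          g (Fin.append z (Fin.append u.1 u.2.2)) ∂νl) ^ 2)
    exact ((hjg.stronglyMeasurable.integral_prod_right').measurable.pow_const 2).stronglyMeasurable
  have hsqΦm : Measurable fun γ => Real.sqrt (Φ γ) :=
    Real.continuous_sqrt.measurable.comp hΦm.measurable
  have hsqΨm : Measurable fun γ => Real.sqrt (Ψ γ) :=
    Real.continuous_sqrt.measurable.comp hΨm.measurable
  -- integrability of √Φ·√Ψ
  have hbound : Integrable (fun γ => Real.sqrt (Φ γ) * Real.sqrt (Ψ γ)) ρ := by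
    refine Integrable.mono' ((hΦint.add hΨint).div_const 2)
      ((hsqΦm.mul hsqΨm).aestronglyMeasurable) ?_
    filter_upwards with γ
    simp only [Pi.add_apply]
    have e1 := Real.sq_sqrt (hΦ0 γ)
    have e2 := Real.sq_sqrt (hΨ0 γ)
    have e3 := Real.sqrt_nonneg (Φ γ)
    have e4 := Real.sqrt_nonneg (Ψ γ)
    rw [Real.norm_eq_abs, abs_of_nonneg (mul_nonneg e3 e4)]
    nlinarith [sq_nonneg (Real.sqrt (Φ γ) - Real.sqrt (Ψ γ))]
  -- Cauchy-Schwarz at the γ level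
  have hΦL2 : MemLp (fun γ => Real.sqrt (Φ γ)) 2 ρ := by
    refine (memLp_two_iff_integrable_sq hsqΦm.aestronglyMeasurable).2 ?_
    exact hΦint.congr (Filter.Eventually.of_forall fun γ => (Real.sq_sqrt (hΦ0 γ)).symm)
  have hΨL2 : MemLp (fun γ => Real.sqrt (Ψ γ)) 2 ρ := by
    refine (memLp_two_iff_integrable_sq hsqΨm.aestronglyMeasurable).2 ?_
    exact hΨint.congr (Filter.Eventually.of_forall fun γ => (Real.sq_sqrt (hΨ0 γ)).symm)
  have hfinal : ∫ γ, Real.sqrt (Φ γ) * Real.sqrt (Ψ γ) ∂ρ ≤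
      Real.sqrt (∫ γ, Φ γ ∂ρ) * Real.sqrt (∫ γ, Ψ γ ∂ρ) := by
    have hconj : (2 : ℝ).HolderConjugate 2 := Real.HolderConjugate.two_two
    have hh := integral_mul_le_Lp_mul_Lq_of_nonneg hconj
      (Filter.Eventually.of_forall fun γ => Real.sqrt_nonneg (Φ γ))
      (Filter.Eventually.of_forall fun γ => Real.sqrt_nonneg (Ψ γ))
      (by simpa using hΦL2) (by simpa using hΨL2)
    have e1 : ∫ γ, Real.sqrt (Φ γ) ^ (2:ℝ) ∂ρ = ∫ γ, Φ γ ∂ρ :=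
      integral_congr_ae (Filter.Eventually.of_forall fun γ => by
        simp [Real.rpow_two, Real.sq_sqrt (hΦ0 γ)])
    have e2 : ∫ γ, Real.sqrt (Ψ γ) ^ (2:ℝ) ∂ρ = ∫ γ, Ψ γ ∂ρ :=
      integral_congr_ae (Filter.Eventually.of_forall fun γ => by
        simp [Real.rpow_two, Real.sq_sqrt (hΨ0 γ)])
    rw [e1, e2, ← Real.sqrt_eq_rpow, ← Real.sqrt_eq_rpow] at hh
    exact hh
  -- iterated ↔ product conversions
  have hLHSeq : (∫ γ, ∫ t, ∫ s,
      (∫ z, f (Fin.append z (Fin.append γ t)) * g (Fin.append z (Fin.append γ s)) ∂νl) ^ 2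
      ∂τc ∂σa ∂ρ) = ∫ γ, S γ ∂ρ := by
    refine integral_congr_ae ?_
    filter_upwards [hfg2.prod_right_ae] with γ hγ
    exact (integral_prod _ hγ).symm
  have hΦeq : (∫ γ, ∫ t, ∫ t',
      (∫ z, f (Fin.append z (Fin.append γ t)) * f (Fin.append z (Fin.append γ t')) ∂νl) ^ 2
      ∂σa ∂σa ∂ρ) = ∫ γ, Φ γ ∂ρ := by
    refine integral_congr_ae ?_
    filter_upwards [hff2.prod_right_ae] with γ hγ
    exact (integral_prod _ hγ).symm
  have hΨeq : (∫ γ, ∫ s, ∫ s',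
      (∫ z, g (Fin.append z (Fin.append γ s)) * g (Fin.append z (Fin.append γ s')) ∂νl) ^ 2
      ∂τc ∂τc ∂ρ) = ∫ γ, Ψ γ ∂ρ := by
    refine integral_congr_ae ?_
    filter_upwards [hgg2.prod_right_ae] with γ hγ
    exact (integral_prod _ hγ).symm
  rw [hLHSeq, hΦeq, hΨeq]
  calc ∫ γ, S γ ∂ρ ≤ ∫ γ, Real.sqrt (Φ γ) * Real.sqrt (Ψ γ) ∂ρ :=
        integral_mono_ae hSint hbound main
    _ ≤ Real.sqrt (∫ γ, Φ γ ∂ρ) * Real.sqrt (∫ γ, Ψ γ ∂ρ) := hfinal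
end

section
/- Let N ~ 𝒩(0, σ²) and N' ~ 𝒩(0, τ²) be centered Gaussian random variables with σ, τ > 0. Then the Wasserstein-1 distance between their laws satisfies d_W(N, N') ≤ (√(2/π) / max(σ, τ)) · |σ² − τ²|. -/
open MeasureTheory ProbabilityTheory
open scoped NNReal

/-- The Wasserstein-1 distance between two laws on `ℝ`:
`d_W(μ, ν) = sup_{f 1-Lipschitz} |∫ f dμ − ∫ f dν|`. -/
noncomputable def wassersteinDist (μ ν : Measure ℝ) : ℝ :=
  ⨆ f : {f : ℝ → ℝ // LipschitzWith 1 f}, |(∫ x, f.1 x ∂μ) - ∫ x, f.1 x ∂ν|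

section Aux

open Real

private lemma gauss_Ioi : ∫ x in Set.Ioi (0:ℝ), x * Real.exp (-x^2/2) = 1 := by
  have hderiv : ∀ x ∈ Set.Ici (0:ℝ), HasDerivAt (fun y : ℝ => -Real.exp (-y^2/2))
      (x * Real.exp (-x^2/2)) x := by
    intro x _
    have h1 : HasDerivAt (fun y : ℝ => -y^2/2) (-x) x := by
      have := ((hasDerivAt_pow 2 x).neg).div_const 2
      convert this using 1
      all_goals first | rfl | (funext y; simp; ring) | (simp; ring) | simp
    have := (h1.exp).neg
    convert this using 1
    all_goals first | rfl | ring
  have hint : IntegrableOn (fun x : ℝ => x * Real.exp (-x^2/2)) (Set.Ioi 0) := by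
    have := (integrable_mul_exp_neg_mul_sq (b := 1/2) (by norm_num)).integrableOn
      (s := Set.Ioi (0:ℝ))
    refine this.congr_fun (fun x _ => ?_) measurableSet_Ioi
    beta_reduce
    ring_nf
  have htend : Filter.Tendsto (fun y : ℝ => -Real.exp (-y^2/2)) Filter.atTop (nhds 0) := by
    rw [← neg_zero]
    refine Filter.Tendsto.neg ?_
    refine Real.tendsto_exp_atBot.comp ?_
    have : Filter.Tendsto (fun y : ℝ => y^2/2) Filter.atTop Filter.atTop :=
      (Filter.tendsto_pow_atTop (by norm_num)).atTop_div_const (by norm_num)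
    have h2 : Filter.Tendsto (fun y : ℝ => -(y^2/2)) Filter.atTop Filter.atBot :=
      Filter.tendsto_neg_atTop_atBot.comp this
    simpa [neg_div] using h2
  have := MeasureTheory.integral_Ioi_of_hasDerivAt_of_tendsto
    (f := fun y : ℝ => -Real.exp (-y^2/2)) (a := 0)
    (by exact (hderiv 0 Set.self_mem_Ici).continuousAt.continuousWithinAt)
    (fun x hx => hderiv x (le_of_lt (Set.mem_Ioi.mp hx))) hint htend
  simpa using this

private lemma gaussian_one_eq : gaussianReal 0 1
    = (volume : Measure ℝ).withDensity (fun x => ((gaussianPDFReal 0 1 x).toNNReal : ENNReal)) := by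
  rw [gaussianReal_of_var_ne_zero 0 one_ne_zero]
  rfl

private lemma pdf_one (x : ℝ) :
    gaussianPDFReal 0 1 x = (Real.sqrt (2*π))⁻¹ * Real.exp (-x^2/2) := by
  simp [gaussianPDFReal]

private lemma integral_gaussian_one (g : ℝ → ℝ) :
    ∫ x, g x ∂(gaussianReal 0 1) = ∫ x, gaussianPDFReal 0 1 x * g x := by
  rw [gaussian_one_eq,
    integral_withDensity_eq_integral_smul ((measurable_gaussianPDFReal 0 1).real_toNNReal) g]
  congr 1; ext x
  simp [NNReal.smul_def, Real.coe_toNNReal _ (gaussianPDFReal_nonneg 0 1 x)]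

private lemma integrable_gaussian_one_iff (g : ℝ → ℝ) :
    Integrable g (gaussianReal 0 1) ↔ Integrable (fun x => gaussianPDFReal 0 1 x * g x) volume := by
  rw [gaussian_one_eq,
    integrable_withDensity_iff_integrable_smul ((measurable_gaussianPDFReal 0 1).real_toNNReal)]
  constructor <;> intro h <;> refine h.congr (Filter.Eventually.of_forall fun x => ?_) <;>
    simp [NNReal.smul_def, Real.coe_toNNReal _ (gaussianPDFReal_nonneg 0 1 x)]

private lemma integrable_abs_gaussian : Integrable (fun x : ℝ => |x|) (gaussianReal 0 1) := by
  rw [integrable_gaussian_one_iff]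
  have h := ((integrable_mul_exp_neg_mul_sq (b := 1/2) (by norm_num)).abs.const_mul
    ((Real.sqrt (2*π))⁻¹))
  refine h.congr (Filter.Eventually.of_forall fun x => ?_)
  simp only [pdf_one, abs_mul, abs_of_nonneg (Real.exp_nonneg _)]
  ring_nf

private lemma sqrt_two_div_pi : Real.sqrt (2/π) = (Real.sqrt (2*π))⁻¹ * 2 := by
  have hπ : (0:ℝ) < π := pi_pos
  have h2π : (0:ℝ) < Real.sqrt (2*π) := Real.sqrt_pos.mpr (by positivity)
  rw [eq_comm, inv_mul_eq_div, div_eq_iff h2π.ne',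
    ← Real.sqrt_mul (by positivity : (0:ℝ) ≤ 2/π)]
  rw [show 2/π*(2*π) = 2^2 by field_simp]
  exact (Real.sqrt_sq (by norm_num : (0:ℝ) ≤ 2)).symm

private lemma abs_moment_gaussian :
    ∫ x, |x| ∂(gaussianReal 0 1) = Real.sqrt (2/π) := by
  rw [integral_gaussian_one, sqrt_two_div_pi]
  have hc : ∀ x : ℝ,
      gaussianPDFReal 0 1 x * |x| = (Real.sqrt (2*π))⁻¹ * (|x| * Real.exp (-x^2/2)) := by
    intro x; rw [pdf_one]; ring
  simp_rw [hc]
  rw [integral_const_mul]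
  congr 1
  have := integral_comp_abs (f := fun t : ℝ => t * Real.exp (-t^2/2))
  simp_rw [sq_abs] at this
  rw [this, gauss_Ioi]
  norm_num

private lemma integrable_lip_gaussian {f : ℝ → ℝ} (hf : LipschitzWith 1 f) (c : ℝ) :
    Integrable (fun x => f (c * x)) (gaussianReal 0 1) := by
  refine Integrable.mono' ((integrable_const |f 0|).add (integrable_abs_gaussian.const_mul |c|))
    ((hf.continuous.comp (continuous_const.mul continuous_id)).aestronglyMeasurable)
    (Filter.Eventually.of_forall fun x => ?_)
  have h1 : |f (c*x) - f 0| ≤ |c| * |x| := by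
    have := hf.dist_le_mul (c*x) 0
    simpa [Real.dist_eq, abs_mul] using this
  have h2 : |f (c*x)| - |f 0| ≤ |f (c*x) - f 0| := abs_sub_abs_le_abs_sub _ _
  simp only [Pi.add_apply, Real.norm_eq_abs]
  linarith

private lemma gaussian_map_sq (c : ℝ≥0) :
    (gaussianReal 0 1).map (fun x => (c:ℝ) * x) = gaussianReal 0 (c^2) := by
  have h : (⟨(c:ℝ)^2, sq_nonneg _⟩ : ℝ≥0) = c^2 := by ext; norm_cast
  have := gaussianReal_map_const_mul (μ := 0) (v := 1) (c:ℝ)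
  convert this using 2
  all_goals simp only [mul_one, mul_zero]
  exact h.symm

end Aux

/-- For centered Gaussians `N ∼ 𝒩(0,σ²)` and `N' ∼ 𝒩(0,τ²)` with `σ, τ > 0`,
`d_W(N, N') ≤ (√(2/π) / max(σ,τ)) ⋅ |σ² − τ²|`. -/
theorem wasserstein_gaussian_bound (σ τ : ℝ≥0) (hσ : 0 < σ) (hτ : 0 < τ) :
    wassersteinDist (gaussianReal 0 (σ ^ 2)) (gaussianReal 0 (τ ^ 2))
      ≤ Real.sqrt (2 / Real.pi) / max (σ : ℝ) (τ : ℝ) * |(σ : ℝ) ^ 2 - (τ : ℝ) ^ 2| := by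
  set s : ℝ := (σ : ℝ) with hs_def
  set t : ℝ := (τ : ℝ) with ht_def
  have hs : 0 < s := hσ
  have ht : 0 < t := hτ
  have hm : 0 < max s t := lt_max_of_lt_left hs
  haveI : Nonempty {f : ℝ → ℝ // LipschitzWith 1 f} := ⟨⟨id, LipschitzWith.id⟩⟩
  refine ciSup_le fun f => ?_
  obtain ⟨f, hf⟩ := f
  -- rewrite via the standard gaussian
  have hintf : ∀ c : ℝ≥0, ∫ x, f x ∂(gaussianReal 0 (c^2))
      = ∫ x, f ((c:ℝ) * x) ∂(gaussianReal 0 1) := by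
    intro c
    rw [← gaussian_map_sq c, integral_map (measurable_const_mul _).aemeasurable
      hf.continuous.aestronglyMeasurable]
  simp only [hintf σ, hintf τ]
  have hIs := integrable_lip_gaussian hf s
  have hIt := integrable_lip_gaussian hf t
  have hbound : |(∫ x, f (s * x) ∂(gaussianReal 0 1)) - ∫ x, f (t * x) ∂(gaussianReal 0 1)|
      ≤ |s - t| * Real.sqrt (2 / Real.pi) := by
    rw [← integral_sub hIs hIt]
    calc |∫ x, (f (s * x) - f (t * x)) ∂(gaussianReal 0 1)|
        ≤ ∫ x, |f (s * x) - f (t * x)| ∂(gaussianReal 0 1) := by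
          simpa [Real.norm_eq_abs] using
            norm_integral_le_integral_norm (fun x => f (s * x) - f (t * x))
              (μ := gaussianReal 0 1)
      _ ≤ ∫ x, |s - t| * |x| ∂(gaussianReal 0 1) := by
          refine integral_mono (hIs.sub hIt).abs (integrable_abs_gaussian.const_mul _) fun x => ?_
          have := hf.dist_le_mul (s*x) (t*x)
          simp only [Real.dist_eq, NNReal.coe_one, one_mul] at this
          calc |f (s*x) - f (t*x)| ≤ |s*x - t*x| := this
            _ = |s - t| * |x| := by rw [← sub_mul, abs_mul]
      _ = |s - t| * Real.sqrt (2 / Real.pi) := by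
          rw [integral_const_mul, abs_moment_gaussian]
  refine hbound.trans ?_
  -- arithmetic: |s-t| √(2/π) ≤ √(2/π)/max s t * |s²-t²|
  have hfac : |s^2 - t^2| = |s - t| * (s + t) := by
    rw [show s^2 - t^2 = (s-t)*(s+t) by ring, abs_mul, abs_of_pos (show (0:ℝ) < s + t by linarith)]
  rw [hfac, div_mul_eq_mul_div, le_div_iff₀ hm]
  have key : |s - t| * max s t ≤ |s - t| * (s + t) :=
    mul_le_mul_of_nonneg_left (max_le (by linarith) (by linarith)) (abs_nonneg _)
  nlinarith [Real.sqrt_nonneg (2 / Real.pi), key]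
end

section
/- Let W = [−1/2, 1/2]^d, Ŵ = [−1, 1]^d, W̌ = [−1/4, 1/4]^d, and H̄ ⊂ ℝ^d measurable. Then 2^{−d} ℓ(H̄ ∩ W̌)² ≤ ∫_{W³} 1_{x₁−x₂ ∈ H̄} 1_{x₁−x₃ ∈ H̄} dx₁dx₂dx₃ ≤ 2^d ℓ(H̄ ∩ Ŵ)², where ℓ denotes Lebesgue measure on ℝ^d. -/
open MeasureTheory
open scoped ENNReal

/-- With `W = [−1/2,1/2]^d`, `Ŵ = [−1,1]^d`, `W̌ = [−1/4,1/4]^d` and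
`H̄ ⊂ ℝ^d` measurable, `2^{−d} ℓ(H̄ ∩ W̌)² ≤ ℓ³{(x₁,x₂,x₃) ∈ W³ : x₁−x₂ ∈ H̄, x₁−x₃ ∈ H̄}
≤ 2^d ℓ(H̄ ∩ Ŵ)²`. -/
theorem cherry_measure_sandwich (d : ℕ)
    (H : Set (Fin d → ℝ)) (hH : MeasurableSet H)
    (W Wh Wc : Set (Fin d → ℝ))
    (hW : W = Set.Icc (fun _ => -(1 / 2 : ℝ)) fun _ => 1 / 2)
    (hWh : Wh = Set.Icc (fun _ => -(1 : ℝ)) fun _ => 1)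
    (hWc : Wc = Set.Icc (fun _ => -(1 / 4 : ℝ)) fun _ => 1 / 4)
    (S : Set ((Fin d → ℝ) × (Fin d → ℝ) × (Fin d → ℝ)))
    (hS : S = {p | p.1 ∈ W ∧ p.2.1 ∈ W ∧ p.2.2 ∈ W ∧
        p.1 - p.2.1 ∈ H ∧ p.1 - p.2.2 ∈ H}) :
    (2 : ℝ≥0∞)⁻¹ ^ d * volume (H ∩ Wc) ^ 2 ≤ volume S ∧
      volume S ≤ (2 : ℝ≥0∞) ^ d * volume (H ∩ Wh) ^ 2 := by
  have hWmeas : MeasurableSet W := hW ▸ measurableSet_Icc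
  have hWcmeas : MeasurableSet Wc := hWc ▸ measurableSet_Icc
  -- the slice set
  set A : (Fin d → ℝ) → Set (Fin d → ℝ) := fun x => W ∩ (fun y => x - y) ⁻¹' H with hA
  have hAmeas : ∀ x, MeasurableSet (A x) := fun x =>
    hWmeas.inter (hH.preimage (measurable_const.sub measurable_id))
  have hmp : ∀ x : Fin d → ℝ, MeasurePreserving (fun y => x - y) volume volume :=
    fun x => Measure.measurePreserving_sub_left volume x
  have hSmeas : MeasurableSet S := by
    rw [hS]
    exact (hWmeas.preimage measurable_fst).inter
      ((hWmeas.preimage (measurable_fst.comp measurable_snd)).inter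
      ((hWmeas.preimage (measurable_snd.comp measurable_snd)).inter
      ((hH.preimage (measurable_fst.sub (measurable_fst.comp measurable_snd))).inter
       (hH.preimage (measurable_fst.sub (measurable_snd.comp measurable_snd))))))
  -- slicing
  have hslice : ∀ x, volume (Prod.mk x ⁻¹' S) =
      W.indicator (fun x => volume (A x) ^ 2) x := by
    intro x
    by_cases hx : x ∈ W
    · have : Prod.mk x ⁻¹' S = (A x) ×ˢ (A x) := by
        ext p
        simp only [hS, Set.mem_preimage, Set.mem_setOf_eq, Set.mem_prod, hA, Set.mem_inter_iff]
        tauto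
      rw [this, Set.indicator_of_mem hx, Measure.volume_eq_prod, Measure.prod_prod, sq]
    · have : Prod.mk x ⁻¹' S = ∅ := by
        ext p
        simp only [hS, Set.mem_preimage, Set.mem_setOf_eq, Set.mem_empty_iff_false]
        tauto
      rw [this, Set.indicator_of_notMem hx, measure_empty]
  have hvolS : volume S = ∫⁻ x, W.indicator (fun x => volume (A x) ^ 2) x := by
    rw [Measure.volume_eq_prod, Measure.prod_apply hSmeas]
    exact lintegral_congr hslice
  have hvolW : volume W = 1 := by
    rw [hW, Real.volume_Icc_pi]
    norm_num
  have hvolWc : volume Wc = (2 : ℝ≥0∞)⁻¹ ^ d := by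
    rw [hWc, Real.volume_Icc_pi]
    have h2 : ENNReal.ofReal ((1 / 4 : ℝ) - -(1 / 4)) = (2 : ℝ≥0∞)⁻¹ := by
      rw [show ((1 / 4 : ℝ) - -(1 / 4)) = (2 : ℝ)⁻¹ by norm_num,
        ENNReal.ofReal_inv_of_pos two_pos, ENNReal.ofReal_ofNat]
    simp only [h2, Finset.prod_const, Finset.card_univ, Fintype.card_fin]
  constructor
  · -- lower bound
    have hWcW : Wc ⊆ W := by
      rw [hWc, hW]
      apply Set.Icc_subset_Icc <;> intro i <;> norm_num
    have hlow : ∀ x ∈ Wc, volume (H ∩ Wc) ≤ volume (A x) := by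
      intro x hx
      have hsub : (fun y => x - y) ⁻¹' (H ∩ Wc) ⊆ A x := by
        intro y hy
        rw [Set.mem_preimage] at hy
        refine ⟨?_, hy.1⟩
        have hu := hy.2
        rw [hWc, Set.mem_Icc] at hx hu
        rw [hW, Set.mem_Icc, Pi.le_def, Pi.le_def]
        have key : ∀ i, -(1 / 2 : ℝ) ≤ y i ∧ y i ≤ 1 / 2 := by
          intro i
          have h1 : -(1 / 4 : ℝ) ≤ x i := hx.1 i
          have h2 : x i ≤ 1 / 4 := hx.2 i
          have h3 : -(1 / 4 : ℝ) ≤ x i - y i := hu.1 i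
          have h4 : x i - y i ≤ 1 / 4 := hu.2 i
          constructor <;> linarith
        exact ⟨fun i => (key i).1, fun i => (key i).2⟩
      calc volume (H ∩ Wc) = volume ((fun y => x - y) ⁻¹' (H ∩ Wc)) :=
            ((hmp x).measure_preimage (hH.inter hWcmeas).nullMeasurableSet).symm
        _ ≤ volume (A x) := measure_mono hsub
    calc (2 : ℝ≥0∞)⁻¹ ^ d * volume (H ∩ Wc) ^ 2
        = ∫⁻ x, Wc.indicator (fun _ => volume (H ∩ Wc) ^ 2) x := by
          rw [lintegral_indicator_const hWcmeas, hvolWc, mul_comm]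
      _ ≤ ∫⁻ x, W.indicator (fun x => volume (A x) ^ 2) x := by
          apply lintegral_mono
          intro x
          by_cases hx : x ∈ Wc
          · rw [Set.indicator_of_mem hx, Set.indicator_of_mem (hWcW hx)]
            exact pow_le_pow_left' (hlow x hx) 2
          · rw [Set.indicator_of_notMem hx]; exact zero_le
      _ = volume S := hvolS.symm
  · -- upper bound
    have hup : ∀ x ∈ W, volume (A x) ≤ volume (H ∩ Wh) := by
      intro x hx
      have hsub : A x ⊆ (fun y => x - y) ⁻¹' (H ∩ Wh) := by
        intro y hy
        rw [Set.mem_preimage]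
        refine ⟨hy.2, ?_⟩
        have hyW := hy.1
        rw [hW, Set.mem_Icc] at hx hyW
        rw [hWh, Set.mem_Icc, Pi.le_def, Pi.le_def]
        have key : ∀ i, -(1 : ℝ) ≤ x i - y i ∧ x i - y i ≤ 1 := by
          intro i
          have h1 : -(1 / 2 : ℝ) ≤ x i := hx.1 i
          have h2 : x i ≤ 1 / 2 := hx.2 i
          have h3 : -(1 / 2 : ℝ) ≤ y i := hyW.1 i
          have h4 : y i ≤ 1 / 2 := hyW.2 i
          constructor <;> linarith
        exact ⟨fun i => (key i).1, fun i => (key i).2⟩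
      calc volume (A x) ≤ volume ((fun y => x - y) ⁻¹' (H ∩ Wh)) := measure_mono hsub
        _ = volume (H ∩ Wh) :=
            (hmp x).measure_preimage (hH.inter (hWh ▸ measurableSet_Icc)).nullMeasurableSet
    calc volume S = ∫⁻ x, W.indicator (fun x => volume (A x) ^ 2) x := hvolS
      _ ≤ ∫⁻ x, W.indicator (fun _ => volume (H ∩ Wh) ^ 2) x := by
          apply lintegral_mono
          intro x
          by_cases hx : x ∈ W
          · rw [Set.indicator_of_mem hx, Set.indicator_of_mem hx]
            exact pow_le_pow_left' (hup x hx) 2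
          · rw [Set.indicator_of_notMem hx]; exact zero_le
      _ = volume (H ∩ Wh) ^ 2 := by
          rw [lintegral_indicator_const hWmeas, hvolW, mul_one]
      _ ≤ (2 : ℝ≥0∞) ^ d * volume (H ∩ Wh) ^ 2 := by
          apply le_mul_of_one_le_left (zero_le)
          exact one_le_pow_of_one_le' one_le_two d
end
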